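/- Let c_1,...,c_m : [0,1] → ℝ² be simple curves (injective continuous maps) whose pairwise intersections form a finite set V = {v_1,...,v_p}, none of which is an endpoint of any curve. Suppose each v_i lies on exactly q_i of the curves. Let J be the set of all closed segments of the curves (images of closed subintervals). Then for every n, any family of (∏_{j=1}^p q_j)·n sets, each consisting of n pairwise disjoint members of J, admits a system of disjoint representatives of size n. -/

import Mathlib

def ov (I J : ℝ × ℝ) : Prop := I.1 ≤ J.2 ∧ J.1 ≤ I.2

theorem sdr_aux {ι : Type} [DecidableEq ι] :
    ∀ (n : ℕ) (S : Finset ι) (A : ι → Finset (ℝ × ℝ)),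
    n ≤ S.card →
    (∀ x ∈ S, n ≤ (A x).card) →
    (∀ x ∈ S, ∀ I ∈ A x, I.1 ≤ I.2) →
    (∀ x ∈ S, ∀ I ∈ A x, ∀ J ∈ A x, I ≠ J → ¬ ov I J) →
    ∃ (T : Finset ι) (f : ι → ℝ × ℝ), T ⊆ S ∧ T.card = n ∧
      (∀ x ∈ T, f x ∈ A x) ∧
      ∀ x ∈ T, ∀ y ∈ T, x ≠ y → ¬ ov (f x) (f y) := by
  intro n
  induction n with
  | zero =>
    intro S A _ _ _ _
    exact ⟨∅, fun _ => (0, 0), by simp, by simp, by simp, by simp⟩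
  | succ n ih =>
    classical
    intro S A hcard hA hprop hov
    have hSne : S.Nonempty := Finset.card_pos.mp (by omega)
    have hUne : (S.biUnion A).Nonempty := by
      obtain ⟨x, hx⟩ := hSne
      have : (A x).Nonempty := Finset.card_pos.mp (by have := hA x hx; omega)
      obtain ⟨I, hI⟩ := this
      exact ⟨I, Finset.mem_biUnion.mpr ⟨x, hx, hI⟩⟩
    obtain ⟨I₀, hI₀U, hmin⟩ := Finset.exists_min_image (S.biUnion A) (fun I => I.2) hUne
    obtain ⟨x₀, hx₀S, hI₀⟩ := Finset.mem_biUnion.mp hI₀U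
    set t₀ : ℝ := I₀.2 with ht₀
    have hminU : ∀ x ∈ S, ∀ J ∈ A x, t₀ ≤ J.2 := fun x hx J hJ =>
      hmin J (Finset.mem_biUnion.mpr ⟨x, hx, hJ⟩)
    set S' := S.erase x₀ with hS'
    set A' : ι → Finset (ℝ × ℝ) := fun x => (A x).filter (fun I => t₀ < I.1) with hA'
    have hcard' : n ≤ S'.card := by
      rw [hS', Finset.card_erase_of_mem hx₀S]
      omega
    have hA'card : ∀ x ∈ S', n ≤ (A' x).card := by
      intro x hx
      have hxS : x ∈ S := Finset.mem_of_mem_erase hx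
      have h1 : ((A x).filter (fun I => ¬ t₀ < I.1)).card ≤ 1 := by
        apply Finset.card_le_one.mpr
        intro I hI J hJ
        simp only [Finset.mem_filter, not_lt] at hI hJ
        by_contra hne
        exact hov x hxS I hI.1 J hJ.1 hne ⟨le_trans hI.2 (hminU x hxS J hJ.1), le_trans hJ.2 (hminU x hxS I hI.1)⟩
      have h2 := Finset.card_filter_add_card_filter_not (s := A x) (p := fun I => t₀ < I.1)
      have := hA x hxS
      simp only [hA']
      omega
    have hA'sub : ∀ x, A' x ⊆ A x := fun x => Finset.filter_subset _ _
    obtain ⟨T, f, hTS, hTcard, hfmem, hfov⟩ := ih S' A' hcard'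
      hA'card
      (fun x hx I hI => hprop x (Finset.mem_of_mem_erase hx) I (hA'sub x hI))
      (fun x hx I hI J hJ => hov x (Finset.mem_of_mem_erase hx) I (hA'sub x hI) J (hA'sub x hJ))
    have hx₀T : x₀ ∉ T := fun h => Finset.notMem_erase x₀ S (hTS h)
    refine ⟨insert x₀ T, fun x => if x = x₀ then I₀ else f x, ?_, ?_, ?_, ?_⟩
    · intro x hx
      rcases Finset.mem_insert.mp hx with h | h
      · exact h ▸ hx₀S
      · exact Finset.mem_of_mem_erase (hTS h)
    · rw [Finset.card_insert_of_notMem hx₀T, hTcard]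
    · intro x hx
      rcases Finset.mem_insert.mp hx with h | h
      · simp [h, hI₀]
      · have hxne : x ≠ x₀ := fun he => hx₀T (he ▸ h)
        simp only [if_neg hxne]
        exact hA'sub x (hfmem x h)
    · intro x hx y hy hxy
      have key : ∀ z ∈ T, ¬ ov I₀ (f z) := by
        intro z hz ⟨h1, h2⟩
        have h3 : t₀ < (f z).1 := (Finset.mem_filter.mp (hfmem z hz)).2
        exact absurd (lt_of_lt_of_le h3 h2) (lt_irrefl _)
      rcases Finset.mem_insert.mp hx with h | h <;> rcases Finset.mem_insert.mp hy with h' | h'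
      · exact absurd (h.trans h'.symm) hxy
      · have hyne : y ≠ x₀ := fun he => hx₀T (he ▸ h')
        simp only [h, if_pos rfl, if_neg hyne]
        exact key y h'
      · have hxne : x ≠ x₀ := fun he => hx₀T (he ▸ h)
        simp only [h', if_pos rfl, if_neg hxne]
        intro hc
        exact key x h ⟨hc.2, hc.1⟩
      · have hxne : x ≠ x₀ := fun he => hx₀T (he ▸ h)
        have hyne : y ≠ x₀ := fun he => hx₀T (he ▸ h')
        simp only [if_neg hxne, if_neg hyne]
        exact hfov x h y h' hxy

theorem stmt_4 (m p n : ℕ) (hn : 0 < n)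
    (c : Fin m → ℝ → ℝ × ℝ)
    (hcont : ∀ i, ContinuousOn (c i) (Set.Icc 0 1))
    (hinj : ∀ i, Set.InjOn (c i) (Set.Icc 0 1))
    (v : Fin p → ℝ × ℝ) (hv : Function.Injective v)
    (hV : (⋃ i, ⋃ j, ⋃ (_ : i ≠ j), (c i '' Set.Icc 0 1 ∩ c j '' Set.Icc 0 1))
        = Set.range v)
    (hend : ∀ a i, v a ≠ c i 0 ∧ v a ≠ c i 1)
    (q : Fin p → ℕ)
    (hq : ∀ a, q a = {i : Fin m | v a ∈ c i '' Set.Icc 0 1}.ncard)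
    (F : Fin ((∏ a, q a) * n) → Fin n → Set (ℝ × ℝ))
    (hF : ∀ x b, ∃ i, ∃ s t : ℝ, 0 ≤ s ∧ s ≤ t ∧ t ≤ 1 ∧ F x b = c i '' Set.Icc s t)
    (hdisj : ∀ x, ∀ b b', b ≠ b' → Disjoint (F x b) (F x b')) :
    ∃ (P : Fin n → Fin ((∏ a, q a) * n)) (g : Fin n → Fin n),
      Function.Injective P ∧
      ∀ j k : Fin n, j ≠ k → Disjoint (F (P j) (g j)) (F (P k) (g k)) := by
  classical
  choose ci cs ct hs0 hst ht1 hFe using hF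
  have hsub : ∀ x b, F x b ⊆ c (ci x b) '' Set.Icc 0 1 := by
    intro x b
    rw [hFe]
    exact Set.image_mono (Set.Icc_subset_Icc (hs0 x b) (ht1 x b))
  have hne : ∀ a : Fin p, ∃ i : Fin m, v a ∈ c i '' Set.Icc 0 1 := by
    intro a
    have h : v a ∈ Set.range v := Set.mem_range_self a
    rw [← hV] at h
    simp only [Set.mem_iUnion] at h
    obtain ⟨i, j, hij, hmem⟩ := h
    exact ⟨i, hmem.1⟩
  have hSubne : ∀ a, Nonempty {i : Fin m // v a ∈ c i '' Set.Icc 0 1} :=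
    fun a => ⟨⟨(hne a).choose, (hne a).choose_spec⟩⟩
  set Φ : Fin ((∏ a, q a) * n) → (∀ a : Fin p, {i : Fin m // v a ∈ c i '' Set.Icc 0 1}) :=
    fun x a => if h : ∃ b, v a ∈ F x b
      then ⟨ci x h.choose, hsub x h.choose h.choose_spec⟩
      else (hSubne a).some with hΦ
  have hPhi : ∀ x a b, v a ∈ F x b → ((Φ x a : Fin m)) = ci x b := by
    intro x a b hm
    have h : ∃ b, v a ∈ F x b := ⟨b, hm⟩
    have hb : h.choose = b := by
      by_contra hne'
      exact (Set.disjoint_left.mp (hdisj x h.choose b hne') h.choose_spec) hm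
    simp only [hΦ, dif_pos h, hb]
  have hcardSub : ∀ a, Fintype.card {i : Fin m // v a ∈ c i '' Set.Icc 0 1} = q a := by
    intro a
    rw [hq a, ← Nat.card_coe_set_eq, Nat.card_eq_fintype_card]
    exact Fintype.card_congr (Equiv.subtypeEquivRight fun i => Iff.rfl)
  have hpig : ∃ φ₀, n ≤ (Finset.univ.filter fun x => Φ x = φ₀).card := by
    haveI : Nonempty (∀ a : Fin p, {i : Fin m // v a ∈ c i '' Set.Icc 0 1}) :=
      ⟨fun a => (hSubne a).some⟩
    apply Fintype.exists_le_card_fiber_of_mul_le_card (f := Φ)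
    rw [Fintype.card_fin, Fintype.card_pi]
    have : (∏ a, Fintype.card {i : Fin m // v a ∈ c i '' Set.Icc 0 1}) = ∏ a, q a :=
      Finset.prod_congr rfl (fun a _ => hcardSub a)
    rw [this]
  obtain ⟨φ₀, hφ₀⟩ := hpig
  set emb : Fin ((∏ a, q a) * n) → Fin n → ℝ × ℝ :=
    fun x b => (((ci x b : ℕ) : ℝ) * 3 + cs x b, ((ci x b : ℕ) : ℝ) * 3 + ct x b) with hemb
  have key1 : ∀ x b x' b', ov (emb x b) (emb x' b') → ¬ Disjoint (F x b) (F x' b') := by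
    intro x b x' b' hovv
    obtain ⟨h1, h2⟩ := hovv
    simp only [hemb] at h1 h2
    have hi : ci x b = ci x' b' := by
      have e1 : ((ci x b : ℕ) : ℝ) * 3 ≤ ((ci x' b' : ℕ) : ℝ) * 3 + 1 := by
        nlinarith [hs0 x b, ht1 x' b']
      have e2 : ((ci x' b' : ℕ) : ℝ) * 3 ≤ ((ci x b : ℕ) : ℝ) * 3 + 1 := by
        nlinarith [hs0 x' b', ht1 x b]
      have n1 : (ci x b : ℕ) * 3 ≤ (ci x' b' : ℕ) * 3 + 1 := by exact_mod_cast e1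
      have n2 : (ci x' b' : ℕ) * 3 ≤ (ci x b : ℕ) * 3 + 1 := by exact_mod_cast e2
      exact Fin.ext (by omega)
    rw [hi] at h1 h2
    have hst1 : cs x b ≤ ct x' b' := by linarith
    have hst2 : cs x' b' ≤ ct x b := by linarith
    rw [Set.not_disjoint_iff]
    refine ⟨c (ci x b) (max (cs x b) (cs x' b')), ?_, ?_⟩
    · rw [hFe]
      exact ⟨max (cs x b) (cs x' b'), ⟨le_max_left _ _, max_le (hst x b) hst2⟩, rfl⟩
    · rw [hFe, ← hi]
      exact ⟨max (cs x b) (cs x' b'), ⟨le_max_right _ _, max_le hst1 (hst x' b')⟩, rfl⟩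
  have key2 : ∀ x b x' b', ci x b = ci x' b' → ¬ Disjoint (F x b) (F x' b') →
      ov (emb x b) (emb x' b') := by
    intro x b x' b' hi hnd
    rw [Set.not_disjoint_iff] at hnd
    obtain ⟨z, hz1, hz2⟩ := hnd
    rw [hFe] at hz1 hz2
    obtain ⟨u, hu, rfl⟩ := hz1
    obtain ⟨u', hu', he⟩ := hz2
    have hu01 : u ∈ Set.Icc (0:ℝ) 1 := ⟨le_trans (hs0 x b) hu.1, le_trans hu.2 (ht1 x b)⟩
    have hu'01 : u' ∈ Set.Icc (0:ℝ) 1 := ⟨le_trans (hs0 x' b') hu'.1, le_trans hu'.2 (ht1 x' b')⟩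
    have huu : u' = u := by
      apply hinj (ci x b) hu'01 hu01
      rw [← hi] at he
      exact he
    have hcast : ((ci x b : ℕ) : ℝ) = ((ci x' b' : ℕ) : ℝ) := by rw [hi]
    have goal1 : ((ci x b : ℕ) : ℝ) * 3 + cs x b ≤ ((ci x' b' : ℕ) : ℝ) * 3 + ct x' b' := by
      have h1 := hu.1; have h2 := hu'.2; linarith
    have goal2 : ((ci x' b' : ℕ) : ℝ) * 3 + cs x' b' ≤ ((ci x b : ℕ) : ℝ) * 3 + ct x b := by
      have h1 := hu'.1; have h2 := hu.2; linarith
    exact ⟨goal1, goal2⟩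
  set A : Fin ((∏ a, q a) * n) → Finset (ℝ × ℝ) :=
    fun x => Finset.image (fun b => emb x b) Finset.univ with hA
  have hembinj : ∀ x, Function.Injective (emb x) := by
    intro x b b' he
    by_contra hbb
    have hovv : ov (emb x b) (emb x b') := by
      rw [he]
      have hb' : ((ci x b' : ℕ) : ℝ) * 3 + cs x b' ≤ ((ci x b' : ℕ) : ℝ) * 3 + ct x b' := by
        linarith [hst x b']
      exact ⟨hb', hb'⟩
    exact key1 x b x b' hovv (hdisj x b b' hbb)
  obtain ⟨T, f, hTsub, hTcard, hfmem, hfov⟩ :=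
    sdr_aux n (Finset.univ.filter fun x => Φ x = φ₀) A hφ₀
      (by
        intro x _
        rw [hA]
        rw [Finset.card_image_of_injective _ (hembinj x), Finset.card_univ, Fintype.card_fin])
      (by
        intro x _ I hI
        obtain ⟨b, _, rfl⟩ := Finset.mem_image.mp hI
        show ((ci x b : ℕ) : ℝ) * 3 + cs x b ≤ ((ci x b : ℕ) : ℝ) * 3 + ct x b
        linarith [hst x b])
      (by
        intro x _ I hI J hJ hIJ hovv
        obtain ⟨b, _, rfl⟩ := Finset.mem_image.mp hI
        obtain ⟨b', _, rfl⟩ := Finset.mem_image.mp hJ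
        have hbb : b ≠ b' := fun h => hIJ (by rw [h])
        exact key1 x b x b' hovv (hdisj x b b' hbb))
  have hsel : ∀ x : Fin ((∏ a, q a) * n), ∃ b : Fin n, x ∈ T → emb x b = f x := by
    intro x
    by_cases hx : x ∈ T
    · obtain ⟨b, _, hb⟩ := Finset.mem_image.mp (hfmem x hx)
      exact ⟨b, fun _ => hb⟩
    · exact ⟨⟨0, hn⟩, fun h => absurd h hx⟩
  choose g' hg' using hsel
  set e := T.orderIsoOfFin hTcard with he
  refine ⟨fun j => (e j : Fin ((∏ a, q a) * n)), fun j => g' (e j : Fin ((∏ a, q a) * n)), ?_, ?_⟩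
  · intro j k h
    exact e.injective (Subtype.coe_injective h)
  · intro j k hjk
    set x := (e j : Fin ((∏ a, q a) * n)) with hx
    set y := (e k : Fin ((∏ a, q a) * n)) with hy
    have hxT : x ∈ T := (e j).2
    have hyT : y ∈ T := (e k).2
    have hxy : x ≠ y := fun h => hjk (e.injective (Subtype.coe_injective h))
    by_contra hnd
    by_cases hi : ci x (g' x) = ci y (g' y)
    · have hovv := key2 x (g' x) y (g' y) hi hnd
      rw [hg' x hxT, hg' y hyT] at hovv
      exact hfov x hxT y hyT hxy hovv
    · rw [Set.not_disjoint_iff] at hnd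
      obtain ⟨z, hz1, hz2⟩ := hnd
      have hz1' : z ∈ c (ci x (g' x)) '' Set.Icc 0 1 := hsub x (g' x) hz1
      have hz2' : z ∈ c (ci y (g' y)) '' Set.Icc 0 1 := hsub y (g' y) hz2
      have hzv : z ∈ Set.range v := by
        rw [← hV]
        simp only [Set.mem_iUnion]
        exact ⟨_, _, hi, hz1', hz2'⟩
      obtain ⟨a, rfl⟩ := hzv
      have h1 := hPhi x a (g' x) hz1
      have h2 := hPhi y a (g' y) hz2
      have hx0 : Φ x = φ₀ := (Finset.mem_filter.mp (hTsub hxT)).2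
      have hy0 : Φ y = φ₀ := (Finset.mem_filter.mp (hTsub hyT)).2
      apply hi
      rw [← h1, ← h2, hx0, hy0]
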